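/- arXiv:1401.1377 — 5 statements merged into one kernel-verified Lean document; each statement's English description precedes it below -/
import Mathlib

section
/- Let A = (a_{i,j}), i, j ∈ {0,1,2,…}, be an infinite matrix with entries from ℤ such that each row has only finitely many nonzero entries and there is a bound B ∈ ℕ with Σ_{j} |a_{i,j}| ≤ B for every row i (bounded row sums). If A is partition regular over ℕ, then there is a nonempty set J ⊆ {0,1,2,…} of column indices such that the columns indexed by J sum to the zero vector, i.e., for every row i, Σ_{j ∈ J} a_{i,j} = 0. -/
/-- If an infinite integer matrix `A` (rows and columns indexed by `ℕ`), each of whose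
rows has finitely many nonzero entries and whose row sums of absolute values are
bounded by some `B ∈ ℕ`, is partition regular over the positive integers, then some
nonempty set `J` of columns sums to the zero vector. -/
theorem bounded_row_sums_columns_sum_zero
    (A : ℕ → ℕ → ℤ)
    (hfin : ∀ i : ℕ, {j : ℕ | A i j ≠ 0}.Finite)
    (B : ℕ)
    (hbound : ∀ i : ℕ, (∑ᶠ j : ℕ, |A i j|) ≤ (B : ℤ))
    (hpr : ∀ (k : ℕ) (c : ℕ → Fin k),
      ∃ x : ℕ → ℕ,
        (∀ j, 0 < x j) ∧
        (∃ i₀ : Fin k, ∀ j, c (x j) = i₀) ∧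
        (∀ i : ℕ, ∑ᶠ j : ℕ, A i j * (x j : ℤ) = 0)) :
    ∃ J : Set ℕ, J.Nonempty ∧ ∀ i : ℕ, ∑ᶠ j ∈ J, A i j = 0 := by
  classical
  obtain ⟨b, hbB, hbp⟩ := Nat.exists_infinite_primes (B + 1)
  have hb1 : 1 < b := hbp.one_lt
  have hb0 : 0 < b := hbp.pos
  set c : ℕ → Fin b := fun n => ⟨(n / b ^ padicValNat b n) % b, Nat.mod_lt _ hb0⟩ with hc
  obtain ⟨x, hxpos, ⟨i₀, hmono⟩, heq⟩ := hpr b c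
  set v : ℕ → ℕ := fun j => padicValNat b (x j) with hv
  set t : ℕ := i₀.val with ht
  have hdig : ∀ j, (x j / b ^ v j) % b = t := fun j => congrArg Fin.val (hmono j)
  have hdvd : ∀ j, b ^ v j ∣ x j := fun j => pow_padicValNat_dvd
  have hndvd : ∀ j, ¬ b ∣ (x j / b ^ v j) := by
    intro j
    have h1 : v j = (x j).factorization b := (Nat.factorization_def (x j) hbp).symm
    rw [hv] at h1 ⊢
    rw [h1]
    exact Nat.not_dvd_ordCompl hbp (hxpos j).ne'
  have ht1 : 0 < t := by
    rcases Nat.eq_zero_or_pos t with h | h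
    · exfalso
      apply hndvd 0
      have := hdig 0
      rw [h] at this
      exact Nat.dvd_of_mod_eq_zero this
    · exact h
  have htb : t < b := i₀.isLt
  -- minimal valuation
  set p := sInf (Set.range v) with hp
  obtain ⟨j₀, hj₀⟩ : p ∈ Set.range v := Nat.sInf_mem (Set.range_nonempty v)
  set J : Set ℕ := {j | v j = p} with hJ
  have hple : ∀ j, p ≤ v j := fun j => Nat.sInf_le ⟨j, rfl⟩
  -- congruence facts
  have hmem : ∀ j ∈ J, ∃ m : ℤ, (x j : ℤ) = t * b ^ p + b ^ (p + 1) * m := by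
    intro j hj
    have hvj : v j = p := hj
    have hxj : x j = b ^ p * (x j / b ^ p) := (Nat.mul_div_cancel' (hvj ▸ hdvd j)).symm
    set q := x j / b ^ p with hq
    have hqt : q % b = t := by rw [hq, ← hvj]; exact hdig j
    have hqd : q = b * (q / b) + t := by rw [← hqt]; exact (Nat.div_add_mod q b).symm.trans (by ring)
    refine ⟨(q / b : ℕ), ?_⟩
    have : x j = b ^ p * (b * (q / b) + t) := by rw [← hqd]; exact hxj
    push_cast [this]
    ring
  have hnotmem : ∀ j ∉ J, ∃ m : ℤ, (x j : ℤ) = b ^ (p + 1) * m := by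
    intro j hj
    have : p + 1 ≤ v j := lt_of_le_of_ne (hple j) (fun h => hj (hJ ▸ h.symm))
    obtain ⟨r, hr⟩ := (pow_dvd_pow b this).trans (hdvd j)
    exact ⟨(r : ℤ), by push_cast [hr]; ring⟩
  refine ⟨J, ⟨j₀, hj₀⟩, ?_⟩
  intro i
  set s : Finset ℕ := (hfin i).toFinset with hs
  have hsupp : Function.support (A i) ⊆ ↑s := by
    intro j hj; simp [hs, Set.Finite.mem_toFinset]; exact hj
  set S : ℤ := ∑ j ∈ s.filter (fun j => j ∈ J), A i j with hS
  -- the finsum equation as finset sum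
  have heqi : ∑ j ∈ s, A i j * (x j : ℤ) = 0 := by
    rw [← heq i]
    exact (finsum_eq_sum_of_support_subset _ (by
      intro j hj
      apply hsupp
      intro h0
      simp [Function.mem_support, h0] at hj)).symm
  -- divisibility
  have hdvdsum : (b : ℤ) ^ (p + 1) ∣ S * (t * b ^ p) := by
    have key : (b : ℤ) ^ (p + 1) ∣
        ∑ j ∈ s, (A i j * (x j : ℤ) - (if j ∈ J then A i j * (t * b ^ p) else 0)) := by
      apply Finset.dvd_sum
      intro j _
      by_cases hj : j ∈ J
      · obtain ⟨m, hm⟩ := hmem j hj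
        simp only [hj, if_pos]
        rw [hm]
        ring_nf
        exact ⟨A i j * m, by ring⟩
      · obtain ⟨m, hm⟩ := hnotmem j hj
        simp only [hj, if_neg, not_false_iff]
        rw [hm]
        exact ⟨A i j * m, by ring⟩
    rw [Finset.sum_sub_distrib, heqi, zero_sub, dvd_neg] at key
    rwa [← Finset.sum_filter, ← Finset.sum_mul] at key
  have hbdvdS : (b : ℤ) ∣ S * t := by
    have h1 : (b : ℤ) ^ (p + 1) = b ^ p * b := by ring
    have h2 : S * (t * b ^ p) = (S * t) * b ^ p := by ring
    rw [h1, h2] at hdvdsum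
    have hbne : ((b : ℤ) ^ p) ≠ 0 := pow_ne_zero _ (by exact_mod_cast hb0.ne')
    rwa [mul_comm ((b:ℤ)^p) (b:ℤ), mul_dvd_mul_iff_right hbne] at hdvdsum
  have hbprime : Prime (b : ℤ) := Nat.prime_iff_prime_int.mp hbp
  have hSdvd : (b : ℤ) ∣ S := by
    rcases hbprime.dvd_mul.mp hbdvdS with h | h
    · exact h
    · exfalso
      have : b ∣ t := by exact_mod_cast h
      exact absurd (Nat.le_of_dvd ht1 this) (not_le.mpr htb)
  -- bound on |S|
  have hSbound : |S| < (b : ℤ) := by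
    have h1 : |S| ≤ ∑ j ∈ s.filter (fun j => j ∈ J), |A i j| :=
      Finset.abs_sum_le_sum_abs _ _
    have h2 : ∑ j ∈ s.filter (fun j => j ∈ J), |A i j| ≤ ∑ j ∈ s, |A i j| :=
      Finset.sum_le_sum_of_subset_of_nonneg (Finset.filter_subset _ _)
        (fun j _ _ => abs_nonneg _)
    have h3 : ∑ j ∈ s, |A i j| = ∑ᶠ j, |A i j| := by
      refine (finsum_eq_sum_of_support_subset _ ?_).symm
      intro j hj
      apply hsupp
      intro h0
      simp [Function.mem_support, h0] at hj
    have h4 := hbound i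
    have : |S| ≤ (B : ℤ) := by rw [← h3] at h4; linarith
    have hBb : (B : ℤ) < b := by exact_mod_cast hbB
    linarith
  have hS0 : S = 0 := Int.eq_zero_of_abs_lt_dvd hSdvd hSbound
  -- convert finsum over J to S
  have hfinJ : (J ∩ Function.support (A i)).Finite := (hfin i).subset (by
    intro j hj
    exact hj.2)
  rw [finsum_mem_eq_sum (A i) hfinJ]
  rw [← hS0, hS]
  apply Finset.sum_congr
  · ext j
    simp [Set.Finite.mem_toFinset, hs, Function.mem_support, Set.mem_inter_iff, and_comm]
  · intros; rfl
end

section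
/- For every integer t ≥ 2 there exists a function ν : {1, 2, …, t−1} → {0, 1, 2} such that whenever i, j ∈ {1, 2, …, t−1} and j ≡ 2i (mod t), one has ν(i) ≠ ν(j). -/
/-- For every integer `t ≥ 2` there is a 3-colouring `ν` of `{1, …, t−1}` such that
whenever `i, j ∈ {1, …, t−1}` and `j ≡ 2i (mod t)`, one has `ν(i) ≠ ν(j)`. -/
theorem doubling_three_colouring (t : ℕ) (ht : 2 ≤ t) :
    ∃ ν : ℕ → Fin 3,
      ∀ i j : ℕ, 1 ≤ i → i < t → 1 ≤ j → j < t →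
        (t : ℤ) ∣ ((j : ℤ) - 2 * (i : ℤ)) → ν i ≠ ν j := by
  have Hex : ∀ a : ℕ, ∃ n : ℕ, a = 0 ∨ t ≤ 2 ^ n * a := by
    intro a
    rcases Nat.eq_zero_or_pos a with h | h
    · exact ⟨0, Or.inl h⟩
    · exact ⟨t, Or.inr (le_trans (Nat.lt_two_pow_self (n := t)).le (Nat.le_mul_of_pos_right _ h))⟩
  set f : ℕ → ℕ := fun a => Nat.find (Hex a) with hf
  have key : ∀ a n : ℕ, 1 ≤ a → (f a ≤ n ↔ t ≤ 2 ^ n * a) := by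
    intro a n ha
    constructor
    · intro h
      rcases Nat.find_spec (Hex a) with h0 | h0
      · omega
      · calc t ≤ 2 ^ (f a) * a := h0
          _ ≤ 2 ^ n * a := Nat.mul_le_mul_right a (Nat.pow_le_pow_right (by norm_num) h)
    · intro h; exact Nat.find_le (Or.inr h)
  have fge1 : ∀ a, 1 ≤ a → a < t → 1 ≤ f a := by
    intro a h1 h2
    by_contra h
    have h' : f a ≤ 0 := by omega
    have := (key a 0 h1).1 h'
    simp at this; omega
  have fdbl : ∀ a, 1 ≤ a → a < t → f a = f (2 * a) + 1 := by
    intro a h1 h2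
    have h2a : 1 ≤ 2 * a := by omega
    have e : ∀ n, f (2 * a) ≤ n ↔ f a ≤ n + 1 := by
      intro n
      rw [key _ _ h2a, key _ _ h1, pow_succ]
      constructor <;> intro h <;> [skip; skip] <;> nlinarith [h]
    have g1 := fge1 a h1 h2
    have l1 : f (2 * a) ≤ f a - 1 := (e _).2 (by omega)
    have l2 : f a ≤ f (2 * a) + 1 := (e _).1 le_rfl
    omega
  have feq1 : ∀ a, 1 ≤ a → a < t → t ≤ 2 * a → f a = 1 := by
    intro a h1 h2 h3
    have h4 := (key a 1 h1).2 (by rw [pow_one]; exact h3)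
    have h5 := fge1 a h1 h2
    omega
  refine ⟨fun i => if 2 * i < t then (if f i % 2 = 0 then 1 else 0)
      else (if f (t - i) % 2 = 0 then 2 else 0), ?_⟩
  intro i j hi1 hi2 hj1 hj2 hdvd
  obtain ⟨c, hc⟩ := hdvd
  have ht0 : (0 : ℤ) < (t : ℤ) := by exact_mod_cast (by omega : 0 < t)
  have hcase : j = 2 * i ∨ 2 * i = j + t := by
    have hclt : c < 1 := by
      have h : (t : ℤ) * c < (t : ℤ) * 1 := by rw [← hc]; omega
      exact lt_of_mul_lt_mul_left h (le_of_lt ht0)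
    have hcgt : -2 < c := by
      have h : (t : ℤ) * (-2) < (t : ℤ) * c := by rw [← hc]; omega
      exact lt_of_mul_lt_mul_left h (le_of_lt ht0)
    have hcv : c = 0 ∨ c = -1 := by omega
    rcases hcv with rfl | rfl <;> simp at hc <;> omega
  rcases hcase with rfl | h2i
  · -- j = 2 * i  (left branch for i)
    have hi_lt : 2 * i < t := hj2
    have e1 : f i = f (2 * i) + 1 := fdbl i hi1 hi2
    by_cases h2j : 2 * (2 * i) < t
    · simp only [if_pos hi_lt, if_pos h2j]
      have hii : f i % 2 = 1 - f (2 * i) % 2 := by omega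
      rcases Nat.mod_two_eq_zero_or_one (f (2 * i)) with hp | hp <;>
        simp [hp, hii]
    · have e2 : f (2 * i) = 1 := feq1 (2 * i) (by omega) hj2 (by omega)
      have e3 : f i = 2 := by omega
      simp only [if_pos hi_lt, if_neg h2j, e3]
      rcases Nat.mod_two_eq_zero_or_one (f (t - 2 * i)) with hp | hp <;>
        simp [hp]
  · -- 2 * i = j + t  (right branch for i)
    have hni : ¬ 2 * i < t := by omega
    have e1 : f (t - i) = f (2 * (t - i)) + 1 := fdbl (t - i) (by omega) (by omega)
    have e2 : t - j = 2 * (t - i) := by omega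
    by_cases h2j : 2 * j < t
    · have e3 : f (2 * (t - i)) = 1 := feq1 _ (by omega) (by omega) (by omega)
      have e4 : f (t - i) = 2 := by omega
      simp only [if_neg hni, if_pos h2j, e4]
      rcases Nat.mod_two_eq_zero_or_one (f j) with hp | hp <;>
        simp [hp]
    · simp only [if_neg hni, if_neg h2j, e2]
      have hii : f (t - i) % 2 = 1 - f (2 * (t - i)) % 2 := by omega
      rcases Nat.mod_two_eq_zero_or_one (f (2 * (t - i))) with hp | hp <;>
        simp [hp, hii]
end

section
/- Let C be a central subset of the positive integers ℕ. Then there exist m, K ∈ ℕ such that for every integer k ≥ K, one has m·ℤ ⊆ C − kC, where kC denotes the k-fold sumset C + C + ⋯ + C (k times), C − kC = {a − b : a ∈ C, b ∈ kC} ⊆ ℤ, and m·ℤ = {m·n : n ∈ ℤ}. -/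
/-- The sum `p + q` of two ultrafilters: `A ∈ p + q` if and only if
`{x | {y | x + y ∈ A} ∈ q} ∈ p`. -/
def uadd {S : Type} [Add S] (p q : Ultrafilter S) : Ultrafilter S :=
  p.bind fun x => q.map (x + ·)

/-- A two-sided ideal of the space of ultrafilters with the operation `uadd`. -/
def IsTwoSidedIdeal {S : Type} [Add S] (I : Set (Ultrafilter S)) : Prop :=
  I.Nonempty ∧ ∀ p ∈ I, ∀ q : Ultrafilter S, uadd p q ∈ I ∧ uadd q p ∈ I

/-- A minimal idempotent ultrafilter: an idempotent belonging to every two-sided ideal. -/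
def MinimalIdempotent {S : Type} [Add S] (p : Ultrafilter S) : Prop :=
  uadd p p = p ∧ ∀ I : Set (Ultrafilter S), IsTwoSidedIdeal I → p ∈ I

/-- A set is central if it belongs to some minimal idempotent ultrafilter. -/
def IsCentral {S : Type} [Add S] (C : Set S) : Prop :=
  ∃ p : Ultrafilter S, MinimalIdempotent p ∧ C ∈ p

/-- The `k`-fold sumset `S + S + ⋯ + S` (`k` times). -/
def kFoldSum {G : Type} [AddCommMonoid G] (S : Set G) (k : ℕ) : Set G :=
  {z | ∃ f : Fin k → G, (∀ i, f i ∈ S) ∧ ∑ i, f i = z}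

namespace CentralAux

/-! ### List helpers -/

lemma lsum_add {α : Type} (l : List α) (f h : α → ℤ) :
    (l.map fun x => f x + h x).sum = (l.map f).sum + (l.map h).sum := by
  induction l with
  | nil => simp
  | cons a l ih => simp [ih]; ring

lemma lsum_neg {α : Type} (l : List α) (f : α → ℤ) :
    (l.map fun x => - f x).sum = - (l.map f).sum := by
  induction l with
  | nil => simp
  | cons a l ih => simp [ih]; ring

lemma lsum_sub {α : Type} (l : List α) (f h : α → ℤ) :
    (l.map fun x => f x - h x).sum = (l.map f).sum - (l.map h).sum := by
  have := lsum_add l f (fun x => - h x)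
  have h2 := lsum_neg l h
  simp only [sub_eq_add_neg]
  rw [this, h2]

lemma lsum_le {α : Type} (l : List α) (c : ℤ) (f : α → ℤ) (h : ∀ x ∈ l, c ≤ f x) :
    (l.length : ℤ) * c ≤ (l.map f).sum := by
  induction l with
  | nil => simp
  | cons a l ih =>
    simp only [List.map_cons, List.sum_cons, List.length_cons]
    have h1 := h a List.mem_cons_self
    have h2 := ih (fun x hx => h x (List.mem_cons_of_mem a hx))
    push_cast
    linarith

lemma lsum_map_eq_const {α : Type} (l : List α) (c : ℕ) (f : α → ℕ)
    (h : ∀ x ∈ l, f x = c) : (l.map f).sum = l.length * c := by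
  induction l with
  | nil => simp
  | cons a l ih =>
    simp only [List.map_cons, List.sum_cons, List.length_cons]
    rw [h a List.mem_cons_self, ih (fun x hx => h x (List.mem_cons_of_mem a hx))]
    ring

lemma sum_fin_cast (l : List ℕ) :
    ∑ i : Fin l.length, ((l.get i : ℕ) : ℤ) = ((l.sum : ℕ) : ℤ) := by
  induction l with
  | nil => simp
  | cons a l ih =>
    simp only [List.length_cons, Fin.sum_univ_succ, List.sum_cons]
    have h0 : ((a :: l).get (0 : Fin (l.length + 1)) : ℕ) = a := rfl
    have hsucc : ∀ i : Fin l.length, ((a :: l).get i.succ : ℕ) = l.get i := fun i => rfl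
    simp only [h0, hsucc, ih]
    push_cast
    ring

/-- Extract a list representation from membership in an `AddSubgroup.closure`. -/
lemma closure_list {D : Set ℤ} (hsym : ∀ x ∈ D, -x ∈ D) {z : ℤ}
    (hz : z ∈ AddSubgroup.closure D) :
    ∃ l : List ℤ, (∀ x ∈ l, x ∈ D) ∧ l.sum = z := by
  induction hz using AddSubgroup.closure_induction with
  | mem x hx => exact ⟨[x], by simp [hx], by simp⟩
  | zero => exact ⟨[], by simp, by simp⟩
  | add x y hx hy ihx ihy =>
    obtain ⟨l1, hl1, hs1⟩ := ihx
    obtain ⟨l2, hl2, hs2⟩ := ihy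
    exact ⟨l1 ++ l2, by
      intro t ht
      rcases List.mem_append.1 ht with h | h
      exacts [hl1 t h, hl2 t h], by rw [List.sum_append, hs1, hs2]⟩
  | neg x hx ihx =>
    obtain ⟨l, hl, hs⟩ := ihx
    refine ⟨l.map (fun t => -t), ?_, ?_⟩
    · intro t ht
      obtain ⟨u, hu, rfl⟩ := List.mem_map.1 ht
      exact hsym u (hl u hu)
    · rw [show l.map (fun t => -t) = l.map (fun t => -(id t)) from rfl]
      rw [lsum_neg l id]
      simp [hs]



/-- `A` meets every window `[t, t+d]` for `t ∈ [a, a+N]`. -/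
def Dense' (A : Set ℕ) (d a N : ℕ) : Prop :=
  ∀ t, a ≤ t → t ≤ a + N → ∃ s ∈ A, t ≤ s ∧ s ≤ t + d

/-- Piecewise syndetic. -/
def PS (A : Set ℕ) : Prop := ∃ d, ∀ N, ∃ a, Dense' A d a N

lemma ps_mono {A B : Set ℕ} (h : PS A) (hAB : A ⊆ B) : PS B := by
  obtain ⟨d, hd⟩ := h
  exact ⟨d, fun N => by
    obtain ⟨a, ha⟩ := hd N
    exact ⟨a, fun t h1 h2 => by
      obtain ⟨s, hs, h3, h4⟩ := ha t h1 h2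
      exact ⟨s, hAB hs, h3, h4⟩⟩⟩

lemma ps_univ : PS Set.univ :=
  ⟨0, fun N => ⟨0, fun t _ _ => ⟨t, trivial, le_refl _, Nat.le_add_right _ _⟩⟩⟩

lemma not_ps_empty : ¬ PS (∅ : Set ℕ) := by
  rintro ⟨d, hd⟩
  obtain ⟨a, ha⟩ := hd 0
  obtain ⟨s, hs, -, -⟩ := ha a le_rfl (Nat.le_add_right _ _)
  exact hs

lemma ps_diff {A B : Set ℕ} (hA : PS A) (hB : ¬ PS B) : PS (A \ B) := by
  obtain ⟨d, hd⟩ := hA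
  rw [PS] at hB
  push_neg at hB
  obtain ⟨N₁, hN₁⟩ := hB d
  refine ⟨N₁ + d, fun M => ?_⟩
  obtain ⟨a, ha⟩ := hd (M + N₁)
  refine ⟨a, fun t₀ h1 h2 => ?_⟩
  obtain ⟨t, ht1, ht2, ht3⟩ : ∃ t, t₀ ≤ t ∧ t ≤ t₀ + N₁ ∧ ∀ s ∈ B, ¬(t ≤ s ∧ s ≤ t + d) := by
    have := hN₁ t₀
    simp only [Dense'] at this
    push_neg at this
    obtain ⟨t, h1', h2', h3'⟩ := this
    exact ⟨t, h1', h2', fun s hs hle => absurd (h3' s hs hle.1) (Nat.not_lt.2 hle.2)⟩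
  obtain ⟨s, hs, hs1, hs2⟩ := ha t (le_trans h1 ht1) (by omega)
  refine ⟨s, ⟨hs, fun hsB => ht3 s hsB ⟨hs1, hs2⟩⟩, by omega, by omega⟩

lemma ps_union {A B : Set ℕ} (h : PS (A ∪ B)) : PS A ∨ PS B := by
  by_cases hA : PS A
  · exact Or.inl hA
  · refine Or.inr (ps_mono (ps_diff h hA) ?_)
    rintro x ⟨hx, hx2⟩
    exact hx.resolve_left hx2

lemma ps_sUnion (t : Set (Set ℕ)) (ht : t.Finite) (h : PS (⋃₀ t)) : ∃ A ∈ t, PS A := by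
  induction t, ht using Set.Finite.induction_on with
  | empty => rw [Set.sUnion_empty] at h; exact absurd h not_ps_empty
  | insert _ _ ih =>
    rename_i A s _ _
    rw [Set.sUnion_insert] at h
    rcases ps_union h with h1 | h2
    · exact ⟨A, Set.mem_insert _ _, h1⟩
    · obtain ⟨B, hB, hB2⟩ := ih h2
      exact ⟨B, Set.mem_insert_of_mem _ hB, hB2⟩

lemma exists_ultrafilter_ps : ∃ u : Ultrafilter ℕ, ∀ A ∈ u, PS A := by
  have cond : ∀ T : Finset (Set ℕ), (↑T : Set (Set ℕ)) ⊆ {s : Set ℕ | ¬ PS sᶜ} →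
      (⋂₀ (↑T : Set (Set ℕ))).Nonempty := by
    intro T hT
    rw [Set.nonempty_iff_ne_empty]
    intro hemp
    have huniv : (⋃₀ (compl '' (↑T : Set (Set ℕ)))) = Set.univ := by
      rw [Set.sUnion_image]
      ext x
      simp only [Set.mem_iUnion, Set.mem_compl_iff, Set.mem_univ, iff_true]
      by_contra hc
      push_neg at hc
      have : x ∈ ⋂₀ (↑T : Set (Set ℕ)) := fun s hs => hc s hs
      rw [hemp] at this
      exact this
    have : PS (⋃₀ (compl '' (↑T : Set (Set ℕ)))) := by rw [huniv]; exact ps_univ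
    obtain ⟨A, hA, hA2⟩ := ps_sUnion _ ((T.finite_toSet).image _) this
    obtain ⟨s, hs, rfl⟩ := hA
    exact (hT hs) hA2
  obtain ⟨u, hu⟩ := Ultrafilter.exists_ultrafilter_of_finite_inter_nonempty
      {s : Set ℕ | ¬ PS sᶜ} cond
  refine ⟨u, fun A hA => ?_⟩
  by_contra hPS
  have : Aᶜ ∈ u := hu (show ¬ PS Aᶜᶜ by rwa [compl_compl])
  exact (Ultrafilter.compl_notMem_iff.2 hA) this



lemma mem_uadd {S : Type} [Add S] {p q : Ultrafilter S} {A : Set S} :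
    A ∈ uadd p q ↔ {x | {y | x + y ∈ A} ∈ q} ∈ p := by
  have : A ∈ uadd p q ↔ A ∈ Filter.bind ↑p (fun x => ↑(q.map (x + ·))) := Iff.rfl
  rw [this, Filter.mem_bind']
  simp only [Ultrafilter.mem_coe, Ultrafilter.mem_map]
  rfl

lemma idem_dvd_mem {p : Ultrafilter ℕ} (hp : uadd p p = p) (g : ℕ) (hg : 0 < g) :
    {n : ℕ | g ∣ n} ∈ p := by
  -- some residue class mod g is in p
  have hres : ∃ r < g, {n : ℕ | n % g = r} ∈ p := by
    by_contra hc
    push_neg at hc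
    have hcompl : ∀ r ∈ Finset.range g, {n : ℕ | n % g = r}ᶜ ∈ p := by
      intro r hr
      exact Ultrafilter.compl_mem_iff_notMem.2 (hc r (Finset.mem_range.1 hr))
    have hint : (⋂ r ∈ Finset.range g, {n : ℕ | n % g = r}ᶜ) ∈ p :=
      (Filter.biInter_mem (Finset.range g).finite_toSet).2 hcompl
    obtain ⟨n, hn⟩ := Ultrafilter.nonempty_of_mem hint
    simp only [Set.mem_iInter, Set.mem_compl_iff, Set.mem_setOf_eq] at hn
    exact hn (n % g) (Finset.mem_range.2 (Nat.mod_lt n hg)) rfl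
  obtain ⟨r, hr, hA⟩ := hres
  have hA2 : {n : ℕ | n % g = r} ∈ uadd p p := by rw [hp]; exact hA
  rw [mem_uadd] at hA2
  have hxmem := Ultrafilter.nonempty_of_mem (p.inter_mem hA hA2)
  obtain ⟨x, hx1, hx2⟩ := hxmem
  have hymem := Ultrafilter.nonempty_of_mem (p.inter_mem hA hx2)
  obtain ⟨y, hy1, hy2⟩ := hymem
  simp only [Set.mem_setOf_eq] at hx1 hy1 hy2
  -- x % g = r, y % g = r, (x + y) % g = r  ⇒  r = 0
  have hr0 : r = 0 := by
    have hmod : (r + r) % g = r :=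
      calc (r + r) % g = (x % g + y % g) % g := by rw [hx1, hy1]
        _ = (x + y) % g := (Nat.add_mod x y g).symm
        _ = r := hy2
    have h2 : Nat.ModEq g (r + r) r := by
      unfold Nat.ModEq
      rw [hmod, Nat.mod_eq_of_lt hr]
    have h3 : (g : ℤ) ∣ ((r : ℤ) - ((r + r : ℕ) : ℤ)) := h2.dvd
    have h4 : (g : ℤ) ∣ (r : ℤ) := by
      have h5 : ((r : ℤ) - ((r + r : ℕ) : ℤ)) = -(r : ℤ) := by push_cast; ring
      rw [h5] at h3
      exact dvd_neg.1 h3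
    exact Nat.eq_zero_of_dvd_of_lt (Int.natCast_dvd_natCast.1 h4) hr
  have : {n : ℕ | n % g = r} = {n : ℕ | g ∣ n} := by
    ext n; simp [hr0, Nat.dvd_iff_mod_eq_zero]
  rwa [this] at hA


lemma ps_uadd_left {q r : Ultrafilter ℕ} (hq : ∀ A ∈ q, PS A) {A : Set ℕ}
    (hA : A ∈ uadd q r) : PS A := by
  rw [mem_uadd] at hA
  obtain ⟨d, hd⟩ := hq _ hA
  refine ⟨d, fun M => ?_⟩
  obtain ⟨a, ha⟩ := hd (M + d)
  -- the finite set of relevant elements of B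
  set B : Set ℕ := {x | {y | x + y ∈ A} ∈ r} with hB
  have hfin : (B ∩ Set.Icc a (a + M + d)).Finite :=
    (Set.finite_Icc a (a + M + d)).subset (Set.inter_subset_right)
  have hS : (⋂ x ∈ B ∩ Set.Icc a (a + M + d), {y | x + y ∈ A}) ∈ r := by
    rw [← Ultrafilter.mem_coe, Filter.biInter_mem hfin]
    simp only [Ultrafilter.mem_coe]
    rintro x ⟨hx1, -⟩
    exact hx1
  obtain ⟨y, hy⟩ := Ultrafilter.nonempty_of_mem hS
  refine ⟨a + y, fun t h1 h2 => ?_⟩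
  obtain ⟨t₀, rfl⟩ : ∃ t₀, t = y + t₀ := ⟨t - y, by omega⟩
  obtain ⟨s, hs, hs1, hs2⟩ := ha t₀ (by omega) (by omega)
  have hsy : s + y ∈ A := by
    simp only [Set.mem_iInter] at hy
    have := hy s ⟨hs, by constructor <;> omega⟩
    simpa [add_comm] using this
  exact ⟨s + y, hsy, by omega, by omega⟩

lemma ps_uadd_right {q r : Ultrafilter ℕ} (hq : ∀ A ∈ q, PS A) {A : Set ℕ}
    (hA : A ∈ uadd r q) : PS A := by
  rw [mem_uadd] at hA
  obtain ⟨x, hx⟩ := Ultrafilter.nonempty_of_mem hA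
  simp only [Set.mem_setOf_eq] at hx
  obtain ⟨d, hd⟩ := hq _ hx
  refine ⟨d, fun M => ?_⟩
  obtain ⟨a, ha⟩ := hd M
  refine ⟨a + x, fun t h1 h2 => ?_⟩
  obtain ⟨t₀, rfl⟩ : ∃ t₀, t = x + t₀ := ⟨t - x, by omega⟩
  obtain ⟨s, hs, hs1, hs2⟩ := ha t₀ (by omega) (by omega)
  exact ⟨x + s, hs, by omega, by omega⟩

lemma minimal_ps {p : Ultrafilter ℕ} (hp : MinimalIdempotent p) : ∀ A ∈ p, PS A := by
  have hideal : IsTwoSidedIdeal {q : Ultrafilter ℕ | ∀ A ∈ q, PS A} := by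
    constructor
    · obtain ⟨u, hu⟩ := exists_ultrafilter_ps
      exact ⟨u, hu⟩
    · intro q hq r
      exact ⟨fun A hA => ps_uadd_left hq hA, fun A hA => ps_uadd_right hq hA⟩
  exact hp.2 _ hideal



lemma lsum_mul {α : Type} (l : List α) (c : ℤ) (f : α → ℤ) :
    (l.map fun x => c * f x).sum = c * (l.map f).sum := by
  induction l with
  | nil => simp
  | cons a l ih => simp [ih]; ring

end CentralAux

open CentralAux

/-- If `C` is a central subset of the positive integers, then there are `m, K ∈ ℕ`
such that for every `k ≥ K` one has `m·ℤ ⊆ C − kC` (differences taken in `ℤ`). -/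
theorem central_mZ_subset_C_sub_kC (C : Set ℕ) (hpos : ∀ n ∈ C, 0 < n)
    (hC : IsCentral C) :
    ∃ m K : ℕ, 0 < m ∧ 0 < K ∧
      ∀ k : ℕ, K ≤ k →
        ∀ z : ℤ, ∃ a ∈ C, ∃ b ∈ kFoldSum ((Nat.cast : ℕ → ℤ) '' C) k,
          (m : ℤ) * z = (a : ℤ) - b := by
  classical
  obtain ⟨p, hpmin, hCp⟩ := hC
  have hPSall := minimal_ps hpmin
  obtain ⟨d, hd⟩ := hPSall C hCp
  -- two distinct elements of C
  obtain ⟨a₀, ha₀⟩ := hd (d + 1)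
  obtain ⟨s₁, hs₁C, hs₁a, hs₁b⟩ := ha₀ a₀ le_rfl (by omega)
  obtain ⟨s₂, hs₂C, hs₂a, hs₂b⟩ := ha₀ (a₀ + d + 1) (by omega) (by omega)
  have hs12 : s₁ < s₂ := by omega
  -- the subgroup generated by differences
  set DC : Set ℤ := {z | ∃ x ∈ C, ∃ y ∈ C, (x : ℤ) - (y : ℤ) = z} with hDCdef
  obtain ⟨g₀, hg₀⟩ := Int.subgroup_cyclic (AddSubgroup.closure DC)
  set g : ℕ := g₀.natAbs with hgdef
  have habs : (g : ℤ) = |g₀| := by rw [hgdef]; exact (Int.abs_eq_natAbs g₀).symm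
  have hdvd : ∀ x ∈ C, ∀ y ∈ C, (g : ℤ) ∣ (x : ℤ) - (y : ℤ) := by
    intro x hx y hy
    have hmem : ((x : ℤ) - (y : ℤ)) ∈ AddSubgroup.closure DC :=
      AddSubgroup.subset_closure ⟨x, hx, y, hy, rfl⟩
    rw [hg₀, AddSubgroup.mem_closure_singleton] at hmem
    obtain ⟨n, hn⟩ := hmem
    refine (Int.natAbs_dvd).2 ⟨n, ?_⟩
    rw [← hn, zsmul_eq_mul, Int.cast_id]; ring
  have hgpos : 0 < g := by
    rcases Nat.eq_zero_or_pos g with h0 | h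
    · exfalso
      have hdd := hdvd s₂ hs₂C s₁ hs₁C
      rw [h0] at hdd
      norm_num at hdd
      have h2 : (s₂ : ℤ) = s₁ := by linarith [sub_eq_zero.1 hdd]
      have h3 : s₂ = s₁ := by exact_mod_cast h2
      omega
    · exact h
  -- g divides every element of C
  have hgel : ∀ x ∈ C, g ∣ x := by
    have hds := idem_dvd_mem hpmin.1 g hgpos
    obtain ⟨c₀, hc₀C, hc₀d⟩ := Ultrafilter.nonempty_of_mem (p.inter_mem hCp hds)
    intro x hx
    have h1 : (g : ℤ) ∣ (x : ℤ) - (c₀ : ℤ) := hdvd x hx c₀ hc₀C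
    have h2 : (g : ℤ) ∣ (c₀ : ℤ) := Int.natCast_dvd_natCast.2 hc₀d
    have h3 : (g : ℤ) ∣ (x : ℤ) := by
      have := dvd_add h1 h2
      simpa using this
    exact_mod_cast h3
  clear hgdef
  clear_value g
  -- the quotient set U
  set U : Set ℕ := {u | g * u ∈ C} with hUdef
  have hCtoU : ∀ x ∈ C, ∃ u, u ∈ U ∧ x = g * u := by
    intro x hx
    refine ⟨x / g, ?_, (Nat.mul_div_cancel' (hgel x hx)).symm⟩
    show g * (x / g) ∈ C
    rwa [Nat.mul_div_cancel' (hgel x hx)]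
  -- dense blocks for U
  have hUdense : ∀ N, ∃ a, Dense' U d a N := by
    intro N
    obtain ⟨a, ha⟩ := hd (g * N + g)
    set q : ℕ := (a + g - 1) / g with hqdef
    have hdm : g * q + (a + g - 1) % g = a + g - 1 := by
      rw [hqdef]; exact Nat.div_add_mod _ _
    have hml := Nat.mod_lt (a + g - 1) hgpos
    have hq1 : a ≤ g * q ∧ g * q ≤ a + g - 1 := by
      constructor <;> omega
    refine ⟨q, fun t' h1 h2 => ?_⟩
    have hmul1 : g * q ≤ g * t' := Nat.mul_le_mul_left g h1
    have hmul2 : g * t' ≤ g * (q + N) := Nat.mul_le_mul_left g h2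
    have hdist : g * (q + N) = g * q + g * N := Nat.mul_add g q N
    obtain ⟨sC, hsC, hsc1, hsc2⟩ := ha (g * t') (by omega) (by omega)
    obtain ⟨u, huU, hu⟩ := hCtoU sC hsC
    refine ⟨u, huU, ?_, ?_⟩
    · have : g * t' ≤ g * u := by omega
      exact Nat.le_of_mul_le_mul_left this hgpos
    · have hdg : d ≤ g * d := Nat.le_mul_of_pos_left d hgpos
      have : g * u ≤ g * (t' + d) := by
        have : g * (t' + d) = g * t' + g * d := Nat.mul_add g t' d
        omega
      exact Nat.le_of_mul_le_mul_left this hgpos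
  -- window-hitting for differences of U, ℕ version
  have P : ∀ n : ℕ, ∃ α ∈ U, ∃ w ∈ U, w + n ≤ α ∧ α ≤ w + n + d := by
    intro n
    obtain ⟨a, ha⟩ := hUdense (n + d)
    obtain ⟨w, hwU, hw1, hw2⟩ := ha a le_rfl (by omega)
    obtain ⟨α, hαU, hα1, hα2⟩ := ha (w + n) (by omega) (by omega)
    exact ⟨α, hαU, w, hwU, by omega, by omega⟩
  -- elements of U
  obtain ⟨v₁, hv₁U, hv₁⟩ := hCtoU s₁ hs₁C
  obtain ⟨v₂, hv₂U, hv₂⟩ := hCtoU s₂ hs₂C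
  have hvlt : v₁ < v₂ := by
    rcases Nat.lt_or_ge v₁ v₂ with h | h
    · exact h
    · exfalso; have : g * v₂ ≤ g * v₁ := Nat.mul_le_mul_left g h; omega
  set u₀ : ℕ := sInf U with hu₀def
  have hu₀U : u₀ ∈ U := Nat.sInf_mem ⟨v₁, hv₁U⟩
  have hu₀min : ∀ u ∈ U, u₀ ≤ u := fun u hu => Nat.sInf_le hu
  obtain ⟨u₁, hu₁U, hu₁gt⟩ : ∃ u₁ ∈ U, u₀ < u₁ := by
    rcases Nat.lt_or_ge u₀ v₂ with h | h
    · exact ⟨v₂, hv₂U, h⟩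
    · exact absurd (hu₀min v₁ hv₁U) (by omega)
  set s : ℕ := u₁ - u₀ with hsdef
  have hspos : 0 < s := by omega
  have hscast : (u₁ : ℤ) = (u₀ : ℤ) + (s : ℤ) := by push_cast; omega
  -- window-hitting, ℤ version
  have W : ∀ L : ℤ, ∃ α ∈ U, ∃ w ∈ U, L ≤ (α : ℤ) - (w : ℤ) ∧ (α : ℤ) - (w : ℤ) ≤ L + d := by
    intro L
    rcases le_or_gt 0 L with hL | hL
    · obtain ⟨α, hα, w, hw, h1, h2⟩ := P L.toNat
      have hLt : (L.toNat : ℤ) = L := Int.toNat_of_nonneg hL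
      exact ⟨α, hα, w, hw, by omega, by omega⟩
    · rcases le_or_gt (-(d : ℤ)) L with hL2 | hL2
      · exact ⟨u₀, hu₀U, u₀, hu₀U, by omega, by omega⟩
      · obtain ⟨α, hα, w, hw, h1, h2⟩ := P (-(L + d)).toNat
        have hLt : ((-(L + d)).toNat : ℤ) = -(L + d) := Int.toNat_of_nonneg (by omega)
        exact ⟨w, hw, α, hα, by omega, by omega⟩
  -- Bezout: a list of pairs of elements of U whose differences sum to 1
  have hg₀mem : g₀ ∈ AddSubgroup.closure DC := by
    rw [hg₀]
    exact AddSubgroup.subset_closure rfl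
  have hsym : ∀ x ∈ DC, -x ∈ DC := by
    rintro x ⟨c1, hc1, c2, hc2, rfl⟩
    exact ⟨c2, hc2, c1, hc1, by ring⟩
  obtain ⟨l, hlD, hlsum⟩ := closure_list hsym hg₀mem
  have hlp0 : ∃ lp : List (ℕ × ℕ), (∀ pr ∈ lp, pr.1 ∈ U ∧ pr.2 ∈ U) ∧
      (g : ℤ) * (lp.map fun pr => (pr.1 : ℤ) - (pr.2 : ℤ)).sum = l.sum := by
    clear hlsum
    induction l with
    | nil => exact ⟨[], by simp, by simp⟩
    | cons x l ih =>
      obtain ⟨lp, hlp, hsum⟩ := ih (fun t ht => hlD t (List.mem_cons_of_mem x ht))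
      obtain ⟨c1, hc1, c2, hc2, hx⟩ := hlD x List.mem_cons_self
      obtain ⟨w1, hw1U, hw1⟩ := hCtoU c1 hc1
      obtain ⟨w2, hw2U, hw2⟩ := hCtoU c2 hc2
      refine ⟨(w1, w2) :: lp, ?_, ?_⟩
      · rintro pr hpr
        rcases List.mem_cons.1 hpr with h | h
        · rw [h]; exact ⟨hw1U, hw2U⟩
        · exact hlp pr h
      · simp only [List.map_cons, List.sum_cons, List.sum_cons]
        rw [mul_add, hsum, ← hx, hw1, hw2]
        push_cast
        ring
  obtain ⟨lp0, hlp0U, hlp0sum⟩ := hlp0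
  rw [hlsum] at hlp0sum
  -- the sum of differences is ±1
  have hT : (lp0.map fun pr => (pr.1 : ℤ) - (pr.2 : ℤ)).sum = 1 ∨
      (lp0.map fun pr => (pr.1 : ℤ) - (pr.2 : ℤ)).sum = -1 := by
    set T := (lp0.map fun pr => (pr.1 : ℤ) - (pr.2 : ℤ)).sum with hTdef
    have hgne : (g : ℤ) ≠ 0 := by exact_mod_cast hgpos.ne'
    have h1 : (g : ℤ) * |T| = (g : ℤ) * 1 := by
      have h0 : |(g : ℤ) * T| = |g₀| := by rw [hlp0sum]
      rw [abs_mul, abs_of_nonneg (by positivity : (0:ℤ) ≤ (g:ℤ)), ← habs] at h0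
      rw [h0, mul_one]
    have hTabs : |T| = 1 := mul_left_cancel₀ hgne h1
    rcases (abs_eq (by norm_num : (0:ℤ) ≤ 1)).1 hTabs with h | h
    · exact Or.inl h
    · exact Or.inr h
  -- normalize to sum = 1 by swapping if needed
  obtain ⟨lp, hlpU, hlpsum⟩ : ∃ lp : List (ℕ × ℕ), (∀ pr ∈ lp, pr.1 ∈ U ∧ pr.2 ∈ U) ∧
      (lp.map fun pr => (pr.1 : ℤ) - (pr.2 : ℤ)).sum = 1 := by
    rcases hT with h | h
    · exact ⟨lp0, hlp0U, h⟩
    · refine ⟨lp0.map Prod.swap, ?_, ?_⟩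
      · rintro pr hpr
        obtain ⟨pr0, hpr0, rfl⟩ := List.mem_map.1 hpr
        exact ⟨(hlp0U pr0 hpr0).2, (hlp0U pr0 hpr0).1⟩
      · rw [List.map_map]
        have : ((fun pr : ℕ × ℕ => (pr.1 : ℤ) - (pr.2 : ℤ)) ∘ Prod.swap) =
            fun pr : ℕ × ℕ => -((pr.1 : ℤ) - (pr.2 : ℤ)) := by
          funext pr
          simp only [Function.comp, Prod.fst_swap, Prod.snd_swap]
          ring
        rw [this, lsum_neg, h]
        ring
  -- abbreviations
  set len : ℕ := lp.length with hlen
  set XZ : ℤ := (lp.map fun pr => (pr.1 : ℤ)).sum with hXZ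
  set YZ : ℤ := (lp.map fun pr => (pr.2 : ℤ)).sum with hYZ
  have hXY : XZ - YZ = 1 := by
    rw [hXZ, hYZ, ← lsum_sub]
    exact hlpsum
  have hYlb : (len : ℤ) * (u₀ : ℤ) ≤ YZ := by
    rw [hYZ, hlen]
    exact lsum_le lp (u₀ : ℤ) _ (fun pr hpr => by exact_mod_cast hu₀min pr.2 (hlpU pr hpr).2)
  set tZ : ℤ := 1 + (s : ℤ) * ((YZ - (len : ℤ) * (u₀ : ℤ)) + 1) with htZdef
  have hspos' : (1 : ℤ) ≤ (s : ℤ) := by exact_mod_cast hspos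
  have htZ1 : 1 ≤ tZ := by
    have h1 : (0 : ℤ) ≤ YZ - (len : ℤ) * (u₀ : ℤ) := by linarith
    have h2 : (0 : ℤ) ≤ (s : ℤ) * ((YZ - (len : ℤ) * (u₀ : ℤ)) + 1) :=
      mul_nonneg (by linarith) (by linarith)
    linarith
  set tv : ℕ := tZ.toNat with htvdef
  have htvZ : (tv : ℤ) = tZ := Int.toNat_of_nonneg (by linarith)
  have htv1 : 1 ≤ tv := by exact_mod_cast (htvZ ▸ htZ1 : (1:ℤ) ≤ (tv:ℤ))
  obtain ⟨F, hF⟩ : ∃ F, F = s * tv := ⟨_, rfl⟩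
  obtain ⟨Pc, hPc⟩ : ∃ Pc, Pc = s * (len * s + 1) := ⟨_, rfl⟩
  refine ⟨g, F + d + Pc + 2, hgpos, by omega, ?_⟩
  intro k hk z
  obtain ⟨α, hαU, w, hwU, hw1, hw2⟩ := W (z + ((k : ℤ) - 1) * (u₀ : ℤ) + F)
  set n : ℤ := (α : ℤ) - (w : ℤ) - z - ((k : ℤ) - 1) * (u₀ : ℤ) with hndef
  have hnF : (F : ℤ) ≤ n ∧ n ≤ (F : ℤ) + d := ⟨by linarith, by linarith⟩
  set nn : ℕ := n.toNat with hnndef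
  have hnnZ : (nn : ℤ) = n := Int.toNat_of_nonneg (by
    have : (0:ℤ) ≤ (F:ℤ) := by positivity
    linarith [hnF.1])
  have hFnn : F ≤ nn := by exact_mod_cast (hnnZ ▸ hnF.1 : (F:ℤ) ≤ (nn:ℤ))
  have hnnle : nn ≤ F + d := by exact_mod_cast (hnnZ ▸ hnF.2 : (nn:ℤ) ≤ (F:ℤ) + (d:ℤ))
  set bb : ℕ := nn % s with hbbdef
  have hbblt : bb < s := Nat.mod_lt _ hspos
  have hq := Nat.div_add_mod nn s
  have hmul : bb * tv ≤ nn := by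
    have h1 : bb * tv ≤ (s - 1) * tv := Nat.mul_le_mul_right _ (by omega)
    have h2 : (s - 1) * tv + tv = s * tv := by
      have h3 : s - 1 + 1 = s := by omega
      calc (s - 1) * tv + tv = (s - 1 + 1) * tv := by ring
        _ = s * tv := by rw [h3]
    omega
  -- divisibility
  have e2' : (tv : ℤ) = 1 + (s : ℤ) * ((YZ - (len : ℤ) * (u₀ : ℤ)) + 1) := by rw [htvZ]
  have e1' : (nn : ℤ) = (s : ℤ) * ((nn / s : ℕ) : ℤ) + (bb : ℤ) := by
    exact_mod_cast congrArg (Nat.cast : ℕ → ℤ) hq.symm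
  have hdivZ : (nn : ℤ) - (bb : ℤ) * (tv : ℤ) =
      (s : ℤ) * (((nn / s : ℕ) : ℤ) - (bb : ℤ) * ((YZ - (len : ℤ) * (u₀ : ℤ)) + 1)) := by
    linear_combination e1' - (bb : ℤ) * e2'
  have hdivN : s ∣ nn - bb * tv := by
    have hce : ((nn - bb * tv : ℕ) : ℤ) = (nn : ℤ) - (bb : ℤ) * (tv : ℤ) := by
      push_cast [Nat.cast_sub hmul]
      ring
    have : (s : ℤ) ∣ ((nn - bb * tv : ℕ) : ℤ) := by
      rw [hce, hdivZ]
      exact Dvd.intro _ rfl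
    exact_mod_cast this
  obtain ⟨aa, haa⟩ := hdivN
  have haaeq : s * aa + bb * tv = nn := by omega
  have haale : aa ≤ nn := by
    have := Nat.le_mul_of_pos_left aa hspos
    omega
  -- counting
  have hbbPc : bb * (len * s + 1) ≤ Pc := by
    rw [hPc]
    exact Nat.mul_le_mul_right _ (by omega)
  obtain ⟨pad, hpad⟩ : ∃ pad, pad = k - (1 + aa + bb * (len * s + 1)) := ⟨_, rfl⟩
  have hpadeq : 1 + aa + bb * (len * s + 1) + pad = k := by omega
  -- the gadget list
  set gl : List ℕ :=
    (lp.map fun pr => g * pr.1 :: List.replicate (s - 1) (g * pr.2)).flatten ++ [g * u₁]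
    with hgl
  have hglen : gl.length = len * s + 1 := by
    rw [hgl, List.length_append, List.length_flatten, List.map_map]
    have : (lp.map (List.length ∘ fun pr : ℕ × ℕ =>
        g * pr.1 :: List.replicate (s - 1) (g * pr.2))).sum = lp.length * s := by
      refine lsum_map_eq_const lp s _ (fun pr _ => ?_)
      simp only [Function.comp_apply, List.length_cons, List.length_replicate]
      omega
    rw [this, hlen]
    simp
  have hglsumN : gl.sum = (lp.map fun pr => g * pr.1 + (s - 1) * (g * pr.2)).sum + g * u₁ := by
    rw [hgl, List.sum_append, List.sum_flatten, List.map_map]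
    have : (lp.map (List.sum ∘ fun pr : ℕ × ℕ =>
        g * pr.1 :: List.replicate (s - 1) (g * pr.2))) =
        lp.map fun pr => g * pr.1 + (s - 1) * (g * pr.2) := by
      refine List.map_congr_left (fun pr _ => ?_)
      simp [List.sum_replicate, smul_eq_mul]
    rw [this]
    simp
  have hglsum : ((gl.sum : ℕ) : ℤ) = (g : ℤ) * (XZ + ((s : ℤ) - 1) * YZ + (u₁ : ℤ)) := by
    rw [hglsumN]
    push_cast
    rw [List.map_map]
    have hfun : ((Nat.cast : ℕ → ℤ) ∘ fun pr : ℕ × ℕ => g * pr.1 + (s - 1) * (g * pr.2)) =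
        fun pr : ℕ × ℕ => (g : ℤ) * (pr.1 : ℤ) + ((s : ℤ) - 1) * ((g : ℤ) * (pr.2 : ℤ)) := by
      funext pr
      simp only [Function.comp_apply]
      push_cast [Nat.cast_sub hspos]
      ring
    rw [hfun]
    have hsplit : (lp.map fun pr : ℕ × ℕ =>
        (g : ℤ) * (pr.1 : ℤ) + ((s : ℤ) - 1) * ((g : ℤ) * (pr.2 : ℤ))).sum =
        (lp.map fun pr : ℕ × ℕ => (g : ℤ) * (pr.1 : ℤ)).sum +
        (lp.map fun pr : ℕ × ℕ => ((s : ℤ) - 1) * ((g : ℤ) * (pr.2 : ℤ))).sum :=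
      lsum_add lp _ _
    rw [hsplit, lsum_mul lp ((g : ℤ)) (fun pr => (pr.1 : ℤ))]
    have : (lp.map fun pr : ℕ × ℕ => ((s : ℤ) - 1) * ((g : ℤ) * (pr.2 : ℤ))).sum =
        ((s : ℤ) - 1) * ((g : ℤ) * YZ) := by
      rw [lsum_mul lp ((s : ℤ) - 1) (fun pr => (g : ℤ) * (pr.2 : ℤ)),
        lsum_mul lp ((g : ℤ)) (fun pr => (pr.2 : ℤ)), ← hYZ]
    rw [this, ← hXZ]
    ring
  -- the final list
  set bl : List ℕ := g * w :: (List.replicate aa (g * u₁) ++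
      (List.replicate bb gl).flatten ++ List.replicate pad (g * u₀)) with hbl
  have hbllen : bl.length = k := by
    rw [hbl]
    simp only [List.length_cons, List.length_append, List.length_replicate,
      List.length_flatten, List.map_replicate]
    rw [List.sum_const_nat bb gl.length, hglen]
    omega
  have hblmem : ∀ x ∈ bl, x ∈ C := by
    intro x hx
    rw [hbl] at hx
    rcases List.mem_cons.1 hx with rfl | hx1
    · exact hwU
    rcases List.mem_append.1 hx1 with hx2 | hx3
    · rcases List.mem_append.1 hx2 with hx4 | hx5
      · rw [(List.mem_replicate.1 hx4).2]; exact hu₁U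
      · obtain ⟨l', hl', hxl'⟩ := List.mem_flatten.1 hx5
        rw [(List.mem_replicate.1 hl').2] at hxl'
        rw [hgl] at hxl'
        rcases List.mem_append.1 hxl' with hx6 | hx7
        · obtain ⟨l'', hl'', hxl''⟩ := List.mem_flatten.1 hx6
          obtain ⟨pr, hpr, rfl⟩ := List.mem_map.1 hl''
          rcases List.mem_cons.1 hxl'' with rfl | hx8
          · exact (hlpU pr hpr).1
          · rw [(List.mem_replicate.1 hx8).2]; exact (hlpU pr hpr).2
        · rw [List.mem_singleton.1 hx7]; exact hu₁U
    · rw [(List.mem_replicate.1 hx3).2]; exact hu₀U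
  have hblsumN : bl.sum = g * w + aa * (g * u₁) + bb * gl.sum + pad * (g * u₀) := by
    rw [hbl]
    simp only [List.sum_cons, List.sum_append, List.sum_flatten, List.map_replicate]
    rw [List.sum_const_nat aa (g * u₁), List.sum_const_nat pad (g * u₀),
      List.sum_const_nat bb gl.sum]
    ring
  have hblsum : ((bl.sum : ℕ) : ℤ) = (g : ℤ) * (w : ℤ) + (aa : ℤ) * ((g : ℤ) * (u₁ : ℤ)) +
      (bb : ℤ) * ((g : ℤ) * (XZ + ((s : ℤ) - 1) * YZ + (u₁ : ℤ))) +
      (pad : ℤ) * ((g : ℤ) * (u₀ : ℤ)) := by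
    rw [hblsumN]
    push_cast [hglsum]
    ring
  -- assemble
  refine ⟨g * α, hαU, ((bl.sum : ℕ) : ℤ), ⟨fun i => ((bl.get (Fin.cast hbllen.symm i) : ℕ) : ℤ),
    fun i => ⟨bl.get (Fin.cast hbllen.symm i),
      hblmem _ (bl.get_mem _), rfl⟩, ?_⟩, ?_⟩
  · have hcongr := Fin.sum_congr' (fun i : Fin bl.length => ((bl.get i : ℕ) : ℤ)) hbllen.symm
    exact hcongr.trans (sum_fin_cast bl)
  · -- the arithmetic identity
    have e1 : (α : ℤ) - (w : ℤ) = z + ((k : ℤ) - 1) * (u₀ : ℤ) + (nn : ℤ) := by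
      rw [hnnZ, hndef]; ring
    have e2 : (u₁ : ℤ) = (u₀ : ℤ) + (s : ℤ) := hscast
    have e3 : XZ + ((s : ℤ) - 1) * YZ + (u₁ : ℤ) =
        ((len : ℤ) * (s : ℤ) + 1) * (u₀ : ℤ) + (tv : ℤ) := by
      linear_combination hXY + e2 + (-1 : ℤ) * e2'
    have e4 : (s : ℤ) * (aa : ℤ) + (bb : ℤ) * (tv : ℤ) = (nn : ℤ) := by
      exact_mod_cast congrArg (Nat.cast : ℕ → ℤ) haaeq
    have e5 : (pad : ℤ) = (k : ℤ) - 1 - (aa : ℤ) - (bb : ℤ) * ((len : ℤ) * (s : ℤ) + 1) := by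
      have := congrArg (Nat.cast : ℕ → ℤ) hpadeq
      push_cast at this
      linarith
    rw [hblsum]
    push_cast
    linear_combination -(g : ℤ) * e1 + (g : ℤ) * (aa : ℤ) * e2 + (g : ℤ) * (bb : ℤ) * e3 +
      (g : ℤ) * e4 + (g : ℤ) * (u₀ : ℤ) * e5
end

section
/- Let (G, +) be a commutative group and let A be a piecewise syndetic subset of G. Then A − A = {a − b : a, b ∈ A} is syndetic in G. -/
/-- A subset `A` of a commutative group `G` is piecewise syndetic if there is a finite
nonempty `H ⊆ G` such that for every finite nonempty `F ⊆ G` there is `x ∈ G` with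
`F + x ⊆ ⋃_{t ∈ H} (−t + A)`. -/
def PiecewiseSyndetic {G : Type} [AddCommGroup G] (A : Set G) : Prop :=
  ∃ H : Finset G, H.Nonempty ∧
    ∀ F : Finset G, F.Nonempty → ∃ x : G, ∀ f ∈ F, ∃ t ∈ H, t + (f + x) ∈ A

/-- A subset `B` of a commutative group `G` is syndetic if there is a finite nonempty
`L ⊆ G` with `G = ⋃_{t ∈ L} (−t + B)`. -/
def Syndetic {G : Type} [AddCommGroup G] (B : Set G) : Prop :=
  ∃ L : Finset G, L.Nonempty ∧ ∀ g : G, ∃ t ∈ L, t + g ∈ B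

/-- If `A` is a piecewise syndetic subset of a commutative group `G`, then
`A − A = {a − b : a, b ∈ A}` is syndetic in `G`. -/
theorem piecewiseSyndetic_sub_self_syndetic {G : Type} [AddCommGroup G] (A : Set G)
    (hA : PiecewiseSyndetic A) :
    Syndetic {z : G | ∃ a ∈ A, ∃ b ∈ A, z = a - b} := by
  classical
  obtain ⟨H, hHne, hH⟩ := hA
  refine ⟨(H ×ˢ H).image (fun p => p.1 - p.2), ?_, ?_⟩
  · exact (hHne.product hHne).image _
  · intro g
    obtain ⟨x, hx⟩ := hH ({0, g}) ⟨0, by simp⟩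
    obtain ⟨t1, ht1H, ht1⟩ := hx 0 (by simp)
    obtain ⟨t2, ht2H, ht2⟩ := hx g (by simp)
    refine ⟨t2 - t1, Finset.mem_image.2 ⟨(t2, t1), Finset.mem_product.2 ⟨ht2H, ht1H⟩, rfl⟩,
      ⟨t2 + (g + x), ht2, t1 + (0 + x), ht1, by abel⟩⟩
end

section
/- Let (G, +) be a commutative group and let d be a function from the subsets of G to the real interval [0, 1] such that d(a + B) = d(B) for every a ∈ G and B ⊆ G, and such that whenever x_1 + B, …, x_n + B are pairwise disjoint translates of a set B ⊆ G one has d((x_1 + B) ∪ ⋯ ∪ (x_n + B)) = n·d(B). Let S ⊆ G satisfy 0 ∈ S, S = −S, and d(S) > 0. Then there is a subgroup E of G such that for every integer l with l·d(S) ≥ 2, the l-fold sumset lS = S + S + ⋯ + S (l times) equals E. -/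
namespace KFoldAux

variable {G : Type} [AddCommGroup G] {S : Set G}

lemma zero_mem_zero : (0:G) ∈ kFoldSum S 0 :=
  ⟨fun _ => 0, fun i => i.elim0, by simp⟩

lemma mem_one {s : G} (hs : s ∈ S) : s ∈ kFoldSum S 1 :=
  ⟨fun _ => s, fun _ => hs, by simp⟩

lemma add_mem {u v : G} {m n : ℕ} (hu : u ∈ kFoldSum S m) (hv : v ∈ kFoldSum S n) :
    u + v ∈ kFoldSum S (m+n) := by
  obtain ⟨f, hf, hfs⟩ := hu
  obtain ⟨g, hg, hgs⟩ := hv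
  refine ⟨Fin.append f g, ?_, ?_⟩
  · intro i
    refine Fin.addCases (fun j => ?_) (fun j => ?_) i
    · simpa [Fin.append_left] using hf j
    · simpa [Fin.append_right] using hg j
  · rw [Fin.sum_univ_add]
    simp [Fin.append_left, Fin.append_right, hfs, hgs]

lemma zero_mem (h0 : (0:G) ∈ S) (k : ℕ) : (0:G) ∈ kFoldSum S k :=
  ⟨fun _ => 0, fun _ => h0, by simp⟩

lemma mono (h0 : (0:G) ∈ S) {m n : ℕ} (hmn : m ≤ n) : kFoldSum S m ⊆ kFoldSum S n := by
  intro u hu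
  obtain ⟨k, rfl⟩ := Nat.exists_eq_add_of_le hmn
  simpa using add_mem hu (zero_mem h0 k)

lemma neg_mem (hsymm : S = {g : G | -g ∈ S}) {u : G} {n : ℕ} (hu : u ∈ kFoldSum S n) :
    -u ∈ kFoldSum S n := by
  obtain ⟨f, hf, hfs⟩ := hu
  refine ⟨fun i => -(f i), fun i => ?_, by rw [← hfs]; simp⟩
  have h := hf i
  rw [hsymm] at h
  exact h

lemma neg_mem_S (hsymm : S = {g : G | -g ∈ S}) {s : G} (hs : s ∈ S) : -s ∈ S := by
  rw [hsymm] at hs; exact hs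

end KFoldAux

open KFoldAux

/-- Let `G` be a commutative group and `d` a `[0,1]`-valued function on subsets of `G`
which is translation invariant and additive on pairwise disjoint finite unions of
translates of a single set.  If `S ⊆ G` satisfies `0 ∈ S`, `S = −S` and `d(S) > 0`,
then there is a subgroup `E` of `G` with `lS = E` for every integer `l` with
`l·d(S) ≥ 2`. -/
theorem symmetric_sumsets_stabilize {G : Type} [AddCommGroup G]
    (d : Set G → ℝ)
    (hrange : ∀ A : Set G, d A ∈ Set.Icc (0 : ℝ) 1)
    (htrans : ∀ (a : G) (B : Set G), d ((a + ·) '' B) = d B)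
    (hdisj : ∀ (B : Set G) (n : ℕ) (x : Fin n → G),
      (∀ i j, i ≠ j → Disjoint ((x i + ·) '' B) ((x j + ·) '' B)) →
      d (⋃ i, (x i + ·) '' B) = n * d B)
    (S : Set G) (h0 : (0 : G) ∈ S) (hsymm : S = {g : G | -g ∈ S}) (hd : 0 < d S) :
    ∃ E : AddSubgroup G, ∀ l : ℕ, 2 ≤ (l : ℝ) * d S → kFoldSum S l = (E : Set G) := by
  -- the key one-step stabilization
  have step : ∀ l : ℕ, 2 ≤ (l : ℝ) * d S → kFoldSum S (l+1) ⊆ kFoldSum S l := by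
    intro l hl x hx
    by_contra hxl
    have hdS1 : d S ≤ 1 := (hrange S).2
    have hl2 : 2 ≤ l := by
      have hcast : (2:ℝ) ≤ (l:ℝ) := by
        nlinarith [Nat.cast_nonneg (α := ℝ) l]
      exact_mod_cast hcast
    obtain ⟨f, hf, hfs⟩ := hx
    set F : ℕ → G := fun t => if h : t < l+1 then f ⟨t, h⟩ else 0 with hFdef
    set p : ℕ → G := fun i => ∑ t ∈ Finset.range i, F t with hpdef
    have hFS : ∀ t, t < l + 1 → F t ∈ S := by
      intro t ht
      simp only [hFdef, dif_pos ht]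
      exact hf ⟨t, ht⟩
    have hp0 : p 0 = 0 := by simp [hpdef]
    have hpx : p (l+1) = x := by
      have h1 : ∀ i : Fin (l+1), F i = f i := by
        intro i
        simp only [hFdef, dif_pos i.isLt]
      calc p (l+1) = ∑ i : Fin (l+1), F i := (Fin.sum_univ_eq_sum_range F (l+1)).symm
        _ = ∑ i, f i := Finset.sum_congr rfl (fun i _ => h1 i)
        _ = x := hfs
    -- difference of partial sums
    have hdiff : ∀ u k : ℕ, u + k ≤ l + 1 → p (u+k) - p u ∈ kFoldSum S k := by
      intro u k
      induction k with
      | zero => intro _; simpa using zero_mem_zero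
      | succ k ih =>
        intro hu
        have h1 : p (u+(k+1)) - p u = (p (u+k) - p u) + F (u+k) := by
          have h2 : p (u+(k+1)) = p (u+k) + F (u+k) := by
            show (∑ t ∈ Finset.range (u+k+1), F t) = _
            rw [Finset.sum_range_succ]
          rw [h2]; abel
        rw [h1]
        exact add_mem (ih (by omega)) (mem_one (hFS (u+k) (by omega)))
    have hxk : ∀ m, m ≤ l → x ∉ kFoldSum S m := fun m hm hmem => hxl (mono h0 hm hmem)
    -- lemma L1 : two intersecting plain translates at distance ≥ 3
    have L1 : ∀ u v : ℕ, ∀ s₁ s₂ : G, s₁ ∈ S → s₂ ∈ S → u + 3 ≤ v → v ≤ l + 1 →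
        p u + s₁ = p v + s₂ → False := by
      intro u v s₁ s₂ hs₁ hs₂ huv hv heq
      have h2 : p v - p u = s₁ - s₂ :=
        sub_eq_sub_iff_add_eq_add.mpr (heq.symm.trans (add_comm (p u) s₁))
      have h2S : p v - p u ∈ kFoldSum S 2 := by
        rw [h2, sub_eq_add_neg]
        exact add_mem (mem_one hs₁) (mem_one (neg_mem_S hsymm hs₂))
      have h1 : x - p v ∈ kFoldSum S (l+1-v) := by
        have h := hdiff v (l+1-v) (by omega)
        rwa [show v + (l+1-v) = l+1 by omega, hpx] at h
      have hpu : p u ∈ kFoldSum S u := by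
        have h := hdiff 0 u (by omega)
        rwa [Nat.zero_add, hp0, sub_zero] at h
      have hxe : x = (x - p v) + ((p v - p u) + p u) := by abel
      refine hxk ((l+1-v) + (2 + u)) (by omega) ?_
      rw [hxe]
      exact add_mem h1 (add_mem h2S hpu)
    -- lemma L2 : a plain translate intersecting a shifted translate
    have L2 : ∀ u w : ℕ, ∀ s₁ s₂ : G, s₁ ∈ S → s₂ ∈ S → u ≤ l + 1 → w ≤ l + 1 →
        u + 2 ≤ l + w → w + 2 ≤ l + u → p u + s₁ = (x + p w) + s₂ → False := by
      intro u w s₁ s₂ hs₁ hs₂ hu hw huw hwu heq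
      have h2S : s₁ - s₂ ∈ kFoldSum S 2 := by
        rw [sub_eq_add_neg]
        exact add_mem (mem_one hs₁) (mem_one (neg_mem_S hsymm hs₂))
      have hxe : (p u - p w) + (s₁ - s₂) = x := by
        rw [show p u - p w + (s₁ - s₂) = (p u + s₁) - (p w + s₂) by abel, heq]
        abel
      rcases le_total w u with hle | hle
      · have h1 : p u - p w ∈ kFoldSum S (u - w) := by
          have h := hdiff w (u - w) (by omega)
          rwa [show w + (u-w) = u by omega] at h
        refine hxk ((u-w) + 2) (by omega) ?_
        rw [← hxe]
        exact add_mem h1 h2S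
      · have h1 : p u - p w ∈ kFoldSum S (w - u) := by
          have h := hdiff u (w - u) (by omega)
          rw [show u + (w-u) = w by omega] at h
          have := neg_mem hsymm h
          rwa [neg_sub] at this
        refine hxk ((w-u) + 2) (by omega) ?_
        rw [← hxe]
        exact add_mem h1 h2S
    -- the family of disjoint translates
    set c : ℕ := (l-2) % 3 with hc
    set b : ℕ := (l-2) / 3 with hb
    set a : ℕ := (l-2+c) / 3 with ha
    set N : ℕ := a + b + 2 with hN
    set y : Fin N → G :=
      fun t => if (t:ℕ) ≤ a then p (3*t) else x + p (3*(t-(a+1)) + c) with hy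
    have hdis : ∀ i j : Fin N, i ≠ j → Disjoint ((y i + ·) '' S) ((y j + ·) '' S) := by
      intro i j hij
      by_contra hnd
      rw [Set.not_disjoint_iff] at hnd
      obtain ⟨z, ⟨s₁, hs₁, hz₁⟩, ⟨s₂, hs₂, hz₂⟩⟩ := hnd
      have heq : y i + s₁ = y j + s₂ := by simpa using hz₁.trans hz₂.symm
      have hiN : (i:ℕ) < N := i.isLt
      have hjN : (j:ℕ) < N := j.isLt
      have hijv : (i:ℕ) ≠ (j:ℕ) := fun h => hij (Fin.ext h)
      by_cases hi : (i:ℕ) ≤ a <;> by_cases hj : (j:ℕ) ≤ a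
      · -- both plain
        rw [hy] at heq
        simp only [if_pos hi, if_pos hj] at heq
        rcases Nat.lt_or_ge (i:ℕ) (j:ℕ) with h | h
        · exact L1 (3*i) (3*j) s₁ s₂ hs₁ hs₂ (by omega) (by omega) heq
        · exact L1 (3*j) (3*i) s₂ s₁ hs₂ hs₁ (by omega) (by omega) heq.symm
      · -- i plain, j shifted
        rw [hy] at heq
        simp only [if_pos hi, if_neg hj] at heq
        have hww : 3*((j:ℕ)-(a+1)) + c ≤ 3*b + c := by omega
        exact L2 (3*i) (3*((j:ℕ)-(a+1)) + c) s₁ s₂ hs₁ hs₂ (by omega) (by omega)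
          (by omega) (by omega) heq
      · -- i shifted, j plain
        rw [hy] at heq
        simp only [if_neg hi, if_pos hj] at heq
        exact L2 (3*j) (3*((i:ℕ)-(a+1)) + c) s₂ s₁ hs₂ hs₁ (by omega) (by omega)
          (by omega) (by omega) heq.symm
      · -- both shifted
        rw [hy] at heq
        simp only [if_neg hi, if_neg hj] at heq
        have heq2 : p (3*((i:ℕ)-(a+1)) + c) + s₁ = p (3*((j:ℕ)-(a+1)) + c) + s₂ := by
          apply add_left_cancel (a := x)
          rw [show x + (p (3*((i:ℕ)-(a+1)) + c) + s₁) = x + p (3*((i:ℕ)-(a+1)) + c) + s₁ by abel,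
            heq]
          abel
        rcases Nat.lt_or_ge (i:ℕ) (j:ℕ) with h | h
        · exact L1 (3*((i:ℕ)-(a+1)) + c) (3*((j:ℕ)-(a+1)) + c) s₁ s₂ hs₁ hs₂ (by omega)
            (by omega) heq2
        · exact L1 (3*((j:ℕ)-(a+1)) + c) (3*((i:ℕ)-(a+1)) + c) s₂ s₁ hs₂ hs₁ (by omega)
            (by omega) heq2.symm
    have hcount := hdisj S N y hdis
    have hle1 : (N:ℝ) * d S ≤ 1 := by
      rw [← hcount]; exact (hrange _).2
    have h2N : l < 2 * N := by omega
    have hlt : (l:ℝ) * d S < 2 * ((N:ℝ) * d S) := by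
      rw [← mul_assoc]
      apply mul_lt_mul_of_pos_right _ hd
      exact_mod_cast h2N
    linarith
  -- stabilization
  have hstab : ∀ l : ℕ, 2 ≤ (l : ℝ) * d S → ∀ k, kFoldSum S (l+k) = kFoldSum S l := by
    intro l hl k
    induction k with
    | zero => rfl
    | succ k ih =>
      rw [← ih]
      have hlk : 2 ≤ ((l+k : ℕ) : ℝ) * d S := by
        have h1 : (l:ℝ) ≤ ((l+k:ℕ):ℝ) := by push_cast; linarith [Nat.cast_nonneg (α := ℝ) k]
        nlinarith
      rw [show l + (k+1) = (l+k) + 1 by omega]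
      exact Set.Subset.antisymm (step (l+k) hlk) (mono h0 (by omega))
  set l₀ : ℕ := ⌈(2:ℝ) / d S⌉₊ with hl₀def
  have hl₀ : 2 ≤ (l₀ : ℝ) * d S := by
    have h1 := Nat.le_ceil ((2:ℝ) / d S)
    rw [div_le_iff₀ hd] at h1
    exact_mod_cast h1
  refine ⟨{ carrier := kFoldSum S l₀,
            add_mem' := ?_,
            zero_mem' := zero_mem h0 l₀,
            neg_mem' := fun ha => neg_mem hsymm ha }, ?_⟩
  · intro u v hu hv
    have h := add_mem hu hv
    have h2 := hstab l₀ hl₀ l₀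
    rw [h2] at h
    exact h
  · intro l hl
    show kFoldSum S l = kFoldSum S l₀
    have h1 := hstab l hl l₀
    have h2 := hstab l₀ hl₀ l
    rw [← h1, Nat.add_comm, h2]
end
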